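/- For every positive integer n: ∑_{k=1}^{n} ((-1)^{k-1}/k^2) · binom(n, k) · H_{n−k} = (H_n · (H_n^2 + H_n^{(2)}))/2 − ∑_{k=0}^{n-1} (-1)^k · (H_n − H_k) / ((k+1)(n−k) · binom(n, k)), as an identity of rational numbers. -/

import Mathlib

open Finset

/-- The `n`-th harmonic number as a rational number. -/
def Hq (n : ℕ) : ℚ := ∑ i ∈ Finset.range n, 1 / (i + 1)

/-- The `n`-th generalized harmonic number of order 2 as a rational number. -/
def H2q (n : ℕ) : ℚ := ∑ i ∈ Finset.range n, 1 / ((i : ℚ) + 1) ^ 2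
/-- alternating order-2 sum: ∑_{j=1}^n (-1)^j / j^2 -/
def Eq2 (n : ℕ) : ℚ := ∑ i ∈ Finset.range n, (-1) ^ (i + 1) / ((i : ℚ) + 1) ^ 2

lemma Hq_succ (n : ℕ) : Hq (n + 1) = Hq n + 1 / ((n : ℚ) + 1) := by
  simp [Hq, Finset.sum_range_succ]
lemma H2q_succ (n : ℕ) : H2q (n + 1) = H2q n + 1 / ((n : ℚ) + 1) ^ 2 := by
  simp [H2q, Finset.sum_range_succ]
lemma Eq2_succ (n : ℕ) : Eq2 (n + 1) = Eq2 n + (-1) ^ (n + 1) / ((n : ℚ) + 1) ^ 2 := by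
  simp [Eq2, Finset.sum_range_succ]

lemma chooseQ1 (n i : ℕ) :
    ((n : ℚ) + 1) * (n.choose i) = ((n + 1).choose (i + 1)) * ((i : ℚ) + 1) := by
  have := Nat.add_one_mul_choose_eq n i
  exact_mod_cast congrArg (fun x : ℕ => (x : ℚ)) this

lemma chooseQ2 (n k : ℕ) (h : k ≤ n + 1) :
    (n.choose k : ℚ) * ((n : ℚ) + 1) = ((n + 1).choose k) * ((n : ℚ) + 1 - k) := by
  have h2 := Nat.choose_mul_succ_eq n k
  have : ((n.choose k * (n + 1) : ℕ) : ℚ) = (((n + 1).choose k * (n + 1 - k) : ℕ) : ℚ) := by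
    exact_mod_cast congrArg (fun x : ℕ => (x : ℚ)) h2
  push_cast [h] at this
  convert this using 2 <;> push_cast <;> ring

lemma chooseQ3 (n k : ℕ) (h : k ≤ n) :
    ((n.choose (k + 1)) : ℚ) * ((k : ℚ) + 1) = (n.choose k) * ((n : ℚ) - k) := by
  have h2 := Nat.choose_succ_right_eq n k
  have : ((n.choose (k+1) * (k + 1) : ℕ) : ℚ) = ((n.choose k * (n - k) : ℕ) : ℚ) := by
    exact_mod_cast congrArg (fun x : ℕ => (x : ℚ)) h2
  push_cast [h] at this
  convert this using 2 <;> push_cast <;> ring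

lemma chooseQ_ne (n k : ℕ) (h : k ≤ n) : (n.choose k : ℚ) ≠ 0 := by
  have := Nat.choose_pos h
  positivity

lemma sumAlt (n : ℕ) (h : n ≠ 0) :
    ∑ i ∈ range n, (-1:ℚ)^i * ((n.choose (i+1)):ℚ) = 1 := by
  have h0 := Int.alternating_sum_range_choose_of_ne h
  have h1 : ((∑ i ∈ range (n+1), (-1:ℤ) ^ i * ↑(n.choose i) : ℤ) : ℚ) = 0 := by rw [h0]; norm_num
  push_cast at h1
  rw [Finset.sum_range_succ'] at h1
  simp at h1
  have h2 : ∑ i ∈ Finset.range n, (-1:ℚ)^(i+1) * ((n.choose (i+1)):ℚ) = -1 := by linarith [h1]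
  calc ∑ i ∈ Finset.range n, (-1:ℚ)^i * ((n.choose (i+1)):ℚ)
      = -∑ i ∈ Finset.range n, (-1:ℚ)^(i+1) * ((n.choose (i+1)):ℚ) := by
        rw [← Finset.sum_neg_distrib]; apply Finset.sum_congr rfl; intro i _; ring
    _ = 1 := by rw [h2]; ring

lemma sumA1 (n : ℕ) :
    ∑ i ∈ range n, (-1:ℚ)^i * ((n.choose (i+1)):ℚ) / ((i:ℚ)+1) = Hq n := by
  induction n with
  | zero => simp [Hq]
  | succ n ih =>
    have split : ∀ i ∈ range (n+1), (-1:ℚ)^i * (((n+1).choose (i+1)):ℚ) / ((i:ℚ)+1)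
        = (-1:ℚ)^i * ((n.choose (i+1)):ℚ) / ((i:ℚ)+1)
          + (-1:ℚ)^i * (((n+1).choose (i+1)):ℚ) / ((n:ℚ)+1) := by
      intro i _
      have hp : (((n+1).choose (i+1)):ℚ) = ((n.choose (i+1)):ℚ) + ((n.choose i):ℚ) := by
        rw [Nat.choose_succ_succ]; push_cast; ring
      have hq := chooseQ1 n i
      have hi : ((i:ℚ)+1) ≠ 0 := by positivity
      have hn : ((n:ℚ)+1) ≠ 0 := by positivity
      rw [hp]; rw [hp] at hq
      field_simp
      linear_combination hq
    rw [Finset.sum_congr rfl split, Finset.sum_add_distrib]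
    have e1 : ∑ i ∈ range (n+1), (-1:ℚ)^i * ((n.choose (i+1)):ℚ) / ((i:ℚ)+1) = Hq n := by
      rw [Finset.sum_range_succ, Nat.choose_succ_self]
      simpa using ih
    have e2 : ∑ i ∈ range (n+1), (-1:ℚ)^i * (((n+1).choose (i+1)):ℚ) / ((n:ℚ)+1)
        = 1 / ((n:ℚ)+1) := by
      rw [← Finset.sum_div, sumAlt (n+1) (Nat.succ_ne_zero n)]
    rw [e1, e2, Hq_succ]

lemma sumA2 (n : ℕ) :
    ∑ i ∈ range n, (-1:ℚ)^i * ((n.choose (i+1)):ℚ) / ((i:ℚ)+1)^2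
      = (Hq n ^ 2 + H2q n) / 2 := by
  induction n with
  | zero => simp [Hq, H2q]
  | succ n ih =>
    have split : ∀ i ∈ range (n+1), (-1:ℚ)^i * (((n+1).choose (i+1)):ℚ) / ((i:ℚ)+1)^2
        = (-1:ℚ)^i * ((n.choose (i+1)):ℚ) / ((i:ℚ)+1)^2
          + (-1:ℚ)^i * (((n+1).choose (i+1)):ℚ) / ((i:ℚ)+1) / ((n:ℚ)+1) := by
      intro i _
      have hp : (((n+1).choose (i+1)):ℚ) = ((n.choose (i+1)):ℚ) + ((n.choose i):ℚ) := by
        rw [Nat.choose_succ_succ]; push_cast; ring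
      have hq := chooseQ1 n i
      have hi : ((i:ℚ)+1) ≠ 0 := by positivity
      have hn : ((n:ℚ)+1) ≠ 0 := by positivity
      rw [hp]; rw [hp] at hq
      field_simp
      linear_combination hq
    rw [Finset.sum_congr rfl split, Finset.sum_add_distrib]
    have e1 : ∑ i ∈ range (n+1), (-1:ℚ)^i * ((n.choose (i+1)):ℚ) / ((i:ℚ)+1)^2
        = (Hq n ^ 2 + H2q n) / 2 := by
      rw [Finset.sum_range_succ, Nat.choose_succ_self]
      simpa using ih
    have e2 : ∑ i ∈ range (n+1), (-1:ℚ)^i * (((n+1).choose (i+1)):ℚ) / ((i:ℚ)+1) / ((n:ℚ)+1)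
        = Hq (n+1) / ((n:ℚ)+1) := by
      rw [← Finset.sum_div, sumA1 (n+1)]
    rw [e1, e2, Hq_succ, H2q_succ]
    have hn : ((n:ℚ)+1) ≠ 0 := by positivity
    field_simp
    ring

lemma sumC (n : ℕ) :
    ∑ i ∈ range (n+1), (-1:ℚ)^i * (((n+1).choose (i+1)):ℚ) * Hq (n+1-(i+1))
      = Hq (n+1) + (-1:ℚ)^(n+1) / ((n:ℚ)+1) := by
  induction n with
  | zero => norm_num [Hq]
  | succ n ih =>
    have split : ∀ i ∈ range (n+2), (-1:ℚ)^i * (((n+2).choose (i+1)):ℚ) * Hq (n+2-(i+1))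
        = (-1:ℚ)^i * (((n+1).choose (i+1)):ℚ) * Hq (n+1-i)
          + (-1:ℚ)^i * (((n+1).choose i):ℚ) * Hq (n+1-i) := by
      intro i _
      have hp : (((n+2).choose (i+1)):ℚ) = (((n+1).choose (i+1)):ℚ) + (((n+1).choose i):ℚ) := by
        rw [Nat.choose_succ_succ]; push_cast; ring
      have : n+2-(i+1) = n+1-i := by omega
      rw [this, hp]; ring
    rw [Finset.sum_congr rfl split, Finset.sum_add_distrib]
    -- Part B
    have eB : ∑ i ∈ range (n+2), (-1:ℚ)^i * (((n+1).choose i):ℚ) * Hq (n+1-i)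
        = (-1:ℚ)^(n+2) / ((n:ℚ)+1) := by
      rw [Finset.sum_range_succ']
      have : ∑ i ∈ range (n+1), (-1:ℚ)^(i+1) * (((n+1).choose (i+1)):ℚ) * Hq (n+1-(i+1))
          = - (Hq (n+1) + (-1:ℚ)^(n+1) / ((n:ℚ)+1)) := by
        rw [← ih, ← Finset.sum_neg_distrib]
        apply Finset.sum_congr rfl; intro i _; ring
      rw [this]
      simp [Hq]
      ring
    -- Part A
    have eA : ∑ i ∈ range (n+2), (-1:ℚ)^i * (((n+1).choose (i+1)):ℚ) * Hq (n+1-i)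
        = (Hq (n+1) + (-1:ℚ)^(n+1) / ((n:ℚ)+1)) + (1 - (-1:ℚ)^(n+1)) / ((n:ℚ)+2) := by
      rw [Finset.sum_range_succ, Nat.choose_succ_self]
      have split2 : ∀ i ∈ range (n+1),
          (-1:ℚ)^i * (((n+1).choose (i+1)):ℚ) * Hq (n+1-i)
          = (-1:ℚ)^i * (((n+1).choose (i+1)):ℚ) * Hq (n+1-(i+1))
            + (-1:ℚ)^i * (((n+2).choose (i+1)):ℚ) / ((n:ℚ)+2) := by
        intro i hi
        have hin : i ≤ n := by simpa [Nat.lt_succ_iff] using hi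
        have h1 : n+1-i = (n+1-(i+1)) + 1 := by omega
        have h2 : ((n+1-(i+1) : ℕ) : ℚ) = (n:ℚ) - i := by
          have : ((n - i : ℕ) : ℚ) = (n:ℚ) - i := by
            push_cast [hin]; ring
          simpa using this
        rw [h1, Hq_succ, h2]
        have hq := chooseQ2 (n+1) (i+1) (by omega)
        push_cast at hq
        have hni : (n:ℚ) - i + 1 ≠ 0 := by
          have : (0:ℚ) ≤ (n:ℚ) - i := by
            have : (i:ℚ) ≤ n := by exact_mod_cast hin
            linarith
          positivity
        have hn2 : ((n:ℚ)+2) ≠ 0 := by positivity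
        have key : (((n+1).choose (i+1)):ℚ)/((n:ℚ)-i+1) = (((n+2).choose (i+1)):ℚ)/((n:ℚ)+2) := by
          rw [div_eq_div_iff hni hn2]
          push_cast
          linear_combination hq
        linear_combination ((-1:ℚ)^i) * key
      rw [Finset.sum_congr rfl split2, Finset.sum_add_distrib, ih]
      have e3 : ∑ i ∈ range (n+1), (-1:ℚ)^i * (((n+2).choose (i+1)):ℚ) / ((n:ℚ)+2)
          = (1 - (-1:ℚ)^(n+1)) / ((n:ℚ)+2) := by
        rw [← Finset.sum_div]
        congr 1
        have := sumAlt (n+2) (by omega)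
        rw [Finset.sum_range_succ, Nat.choose_self] at this
        push_cast at this
        linarith [this]
      rw [e3]
      simp
    rw [eA, eB, Hq_succ (n+1)]
    have hn1 : ((n:ℚ)+1) ≠ 0 := by positivity
    have hn2 : ((n:ℚ)+2) ≠ 0 := by positivity
    push_cast
    field_simp
    ring

lemma sumB (n : ℕ) :
    ∑ i ∈ range n, (-1:ℚ)^i * ((n.choose (i+1)):ℚ) * Hq (n-(i+1)) / ((i:ℚ)+1)
      = Hq n ^ 2 + H2q n + 2 * Eq2 n := by
  induction n with
  | zero => norm_num [Hq, H2q, Eq2]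
  | succ n ih =>
    have split : ∀ i ∈ range (n+1),
        (-1:ℚ)^i * (((n+1).choose (i+1)):ℚ) * Hq (n+1-(i+1)) / ((i:ℚ)+1)
        = (-1:ℚ)^i * ((n.choose (i+1)):ℚ) * Hq (n+1-(i+1)) / ((i:ℚ)+1)
          + (-1:ℚ)^i * (((n+1).choose (i+1)):ℚ) * Hq (n+1-(i+1)) / ((n:ℚ)+1) := by
      intro i _
      have hp : (((n+1).choose (i+1)):ℚ) = ((n.choose (i+1)):ℚ) + ((n.choose i):ℚ) := by
        rw [Nat.choose_succ_succ]; push_cast; ring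
      have hq := chooseQ1 n i
      have hi : ((i:ℚ)+1) ≠ 0 := by positivity
      have hn : ((n:ℚ)+1) ≠ 0 := by positivity
      rw [hp]; rw [hp] at hq
      field_simp
      linear_combination Hq (n+1-(i+1)) * hq
    rw [Finset.sum_congr rfl split, Finset.sum_add_distrib]
    have eB : ∑ i ∈ range (n+1),
        (-1:ℚ)^i * (((n+1).choose (i+1)):ℚ) * Hq (n+1-(i+1)) / ((n:ℚ)+1)
        = (Hq (n+1) + (-1:ℚ)^(n+1) / ((n:ℚ)+1)) / ((n:ℚ)+1) := by
      rw [← Finset.sum_div, sumC n]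
    have eA : ∑ i ∈ range (n+1),
        (-1:ℚ)^i * ((n.choose (i+1)):ℚ) * Hq (n+1-(i+1)) / ((i:ℚ)+1)
        = (Hq n ^ 2 + H2q n + 2 * Eq2 n)
          + (Hq (n+1) - (-1:ℚ)^n / ((n:ℚ)+1)) / ((n:ℚ)+1) := by
      rw [Finset.sum_range_succ, Nat.choose_succ_self]
      have split2 : ∀ i ∈ range n,
          (-1:ℚ)^i * ((n.choose (i+1)):ℚ) * Hq (n+1-(i+1)) / ((i:ℚ)+1)
          = (-1:ℚ)^i * ((n.choose (i+1)):ℚ) * Hq (n-(i+1)) / ((i:ℚ)+1)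
            + (-1:ℚ)^i * (((n+1).choose (i+1)):ℚ) / (((i:ℚ)+1) * ((n:ℚ)+1)) := by
        intro i hi
        have hin : i + 1 ≤ n := by have := Finset.mem_range.mp hi; omega
        have h1 : n+1-(i+1) = (n-(i+1)) + 1 := by omega
        have h2 : ((n-(i+1) : ℕ) : ℚ) = (n:ℚ) - i - 1 := by
          push_cast [hin]; ring
        rw [h1, Hq_succ, h2]
        have h5 : (n:ℚ) - i - 1 + 1 = (n:ℚ) - i := by ring
        rw [h5]
        have hq := chooseQ2 n (i+1) (by omega)
        push_cast at hq
        have hile : ((i:ℚ)+1) ≤ n := by exact_mod_cast hin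
        have hni : (n:ℚ) - i ≠ 0 := by
          have : (0:ℚ) < (n:ℚ) - i := by linarith
          linarith
        have hi0 : ((i:ℚ)+1) ≠ 0 := by positivity
        have hn0 : ((n:ℚ)+1) ≠ 0 := by positivity
        field_simp
        linear_combination hq
      rw [Finset.sum_congr rfl split2, Finset.sum_add_distrib]
      have e3 : ∑ i ∈ range n, (-1:ℚ)^i * (((n+1).choose (i+1)):ℚ) / (((i:ℚ)+1) * ((n:ℚ)+1))
          = (Hq (n+1) - (-1:ℚ)^n / ((n:ℚ)+1)) / ((n:ℚ)+1) := by
        have : ∀ i ∈ range n, (-1:ℚ)^i * (((n+1).choose (i+1)):ℚ) / (((i:ℚ)+1) * ((n:ℚ)+1))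
            = ((-1:ℚ)^i * (((n+1).choose (i+1)):ℚ) / ((i:ℚ)+1)) / ((n:ℚ)+1) := by
          intro i _; rw [div_div]
        rw [Finset.sum_congr rfl this, ← Finset.sum_div]
        congr 1
        have h4 := sumA1 (n+1)
        rw [Finset.sum_range_succ, Nat.choose_self] at h4
        push_cast at h4
        linear_combination h4
      rw [e3, ih]
      simp
    rw [eA, eB, Hq_succ n, H2q_succ n, Eq2_succ n]
    have hn : ((n:ℚ)+1) ≠ 0 := by positivity
    field_simp
    ring

def Lsum (n : ℕ) : ℚ :=
  ∑ i ∈ range n, (-1:ℚ)^i * ((n.choose (i+1)):ℚ) * Hq (n-(i+1)) / ((i:ℚ)+1)^2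

lemma Lsum_succ (n : ℕ) :
    Lsum (n+1) = Lsum n
      + (Hq (n+1) ^ 2 + H2q (n+1) + 2 * Eq2 (n+1)) / ((n:ℚ)+1)
      + ((Hq (n+1) ^ 2 + H2q (n+1)) / 2) / ((n:ℚ)+1)
      + (-1:ℚ)^(n+1) / ((n:ℚ)+1)^3 := by
  have split : ∀ i ∈ range (n+1),
      (-1:ℚ)^i * (((n+1).choose (i+1)):ℚ) * Hq (n+1-(i+1)) / ((i:ℚ)+1)^2
      = (-1:ℚ)^i * ((n.choose (i+1)):ℚ) * Hq (n+1-(i+1)) / ((i:ℚ)+1)^2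
        + ((-1:ℚ)^i * (((n+1).choose (i+1)):ℚ) * Hq (n+1-(i+1)) / ((i:ℚ)+1)) / ((n:ℚ)+1) := by
    intro i _
    have hp : (((n+1).choose (i+1)):ℚ) = ((n.choose (i+1)):ℚ) + ((n.choose i):ℚ) := by
      rw [Nat.choose_succ_succ]; push_cast; ring
    have hq := chooseQ1 n i
    have hi : ((i:ℚ)+1) ≠ 0 := by positivity
    have hn : ((n:ℚ)+1) ≠ 0 := by positivity
    rw [hp]; rw [hp] at hq
    field_simp
    linear_combination Hq (n+1-(i+1)) * hq
  unfold Lsum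
  rw [Finset.sum_congr rfl split, Finset.sum_add_distrib]
  have eB : ∑ i ∈ range (n+1),
      ((-1:ℚ)^i * (((n+1).choose (i+1)):ℚ) * Hq (n+1-(i+1)) / ((i:ℚ)+1)) / ((n:ℚ)+1)
      = (Hq (n+1) ^ 2 + H2q (n+1) + 2 * Eq2 (n+1)) / ((n:ℚ)+1) := by
    rw [← Finset.sum_div, sumB (n+1)]
  have eA : ∑ i ∈ range (n+1),
      (-1:ℚ)^i * ((n.choose (i+1)):ℚ) * Hq (n+1-(i+1)) / ((i:ℚ)+1)^2
      = (∑ i ∈ range n, (-1:ℚ)^i * ((n.choose (i+1)):ℚ) * Hq (n-(i+1)) / ((i:ℚ)+1)^2)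
        + (((Hq (n+1) ^ 2 + H2q (n+1)) / 2) - (-1:ℚ)^n / ((n:ℚ)+1)^2) / ((n:ℚ)+1) := by
    rw [Finset.sum_range_succ, Nat.choose_succ_self]
    have split2 : ∀ i ∈ range n,
        (-1:ℚ)^i * ((n.choose (i+1)):ℚ) * Hq (n+1-(i+1)) / ((i:ℚ)+1)^2
        = (-1:ℚ)^i * ((n.choose (i+1)):ℚ) * Hq (n-(i+1)) / ((i:ℚ)+1)^2
          + ((-1:ℚ)^i * (((n+1).choose (i+1)):ℚ) / ((i:ℚ)+1)^2) / ((n:ℚ)+1) := by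
      intro i hi
      have hin : i + 1 ≤ n := by have := Finset.mem_range.mp hi; omega
      have h1 : n+1-(i+1) = (n-(i+1)) + 1 := by omega
      have h2 : ((n-(i+1) : ℕ) : ℚ) = (n:ℚ) - i - 1 := by push_cast [hin]; ring
      rw [h1, Hq_succ, h2]
      have h5 : (n:ℚ) - i - 1 + 1 = (n:ℚ) - i := by ring
      rw [h5]
      have hq := chooseQ2 n (i+1) (by omega)
      push_cast at hq
      have hile : ((i:ℚ)+1) ≤ n := by exact_mod_cast hin
      have hni : (n:ℚ) - i ≠ 0 := by
        have : (0:ℚ) < (n:ℚ) - i := by linarith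
        linarith
      have hi0 : ((i:ℚ)+1) ≠ 0 := by positivity
      have hn0 : ((n:ℚ)+1) ≠ 0 := by positivity
      field_simp
      linear_combination hq
    rw [Finset.sum_congr rfl split2, Finset.sum_add_distrib]
    have e3 : ∑ i ∈ range n, ((-1:ℚ)^i * (((n+1).choose (i+1)):ℚ) / ((i:ℚ)+1)^2) / ((n:ℚ)+1)
        = (((Hq (n+1) ^ 2 + H2q (n+1)) / 2) - (-1:ℚ)^n / ((n:ℚ)+1)^2) / ((n:ℚ)+1) := by
      rw [← Finset.sum_div]
      congr 1
      have h4 := sumA2 (n+1)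
      rw [Finset.sum_range_succ, Nat.choose_self] at h4
      push_cast at h4
      linear_combination h4
    rw [e3]
    simp
  rw [eA, eB]
  have hn : ((n:ℚ)+1) ≠ 0 := by positivity
  field_simp
  ring

lemma sumX1 (n : ℕ) :
    ∑ i ∈ range n, (-1:ℚ)^i / (((i:ℚ)+1) * ((n.choose (i+1)):ℚ))
      = (1 - (-1:ℚ)^n) / ((n:ℚ)+1) := by
  have split : ∀ i ∈ range n,
      (-1:ℚ)^i / (((i:ℚ)+1) * ((n.choose (i+1)):ℚ))
      = (-1:ℚ)^i / (((i:ℚ)+1) * (((n+1).choose (i+1)):ℚ))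
        + (-1:ℚ)^i / ((((n:ℚ))-i) * (((n+1).choose (i+1)):ℚ)) := by
    intro i hi
    have hin : i + 1 ≤ n := by have := Finset.mem_range.mp hi; omega
    have hq := chooseQ2 n (i+1) (by omega)
    push_cast at hq
    have hile : ((i:ℚ)+1) ≤ n := by exact_mod_cast hin
    have hni : (n:ℚ) - i ≠ 0 := by
      have : (0:ℚ) < (n:ℚ) - i := by linarith
      linarith
    have hi0 : ((i:ℚ)+1) ≠ 0 := by positivity
    have hn0 : ((n:ℚ)+1) ≠ 0 := by positivity
    have hc1 : ((n.choose (i+1)):ℚ) ≠ 0 := chooseQ_ne n (i+1) hin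
    have hc2 : (((n+1).choose (i+1)):ℚ) ≠ 0 := chooseQ_ne (n+1) (i+1) (by omega)
    field_simp
    linear_combination (-1:ℚ) * hq
  rw [Finset.sum_congr rfl split, Finset.sum_add_distrib]
  have e2 : ∀ i ∈ range n,
      (-1:ℚ)^i / ((((n:ℚ))-i) * (((n+1).choose (i+1)):ℚ))
      = -((-1:ℚ)^(i+1) / (((i:ℚ)+1+1) * (((n+1).choose (i+1+1)):ℚ))) := by
    intro i hi
    have hin : i + 1 ≤ n := by have := Finset.mem_range.mp hi; omega
    have hq := chooseQ3 (n+1) (i+1) (by omega)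
    push_cast at hq
    have hile : ((i:ℚ)+1) ≤ n := by exact_mod_cast hin
    have hni : (n:ℚ) - i ≠ 0 := by
      have : (0:ℚ) < (n:ℚ) - i := by linarith
      linarith
    have hi0 : ((i:ℚ)+1+1) ≠ 0 := by positivity
    have hc2 : (((n+1).choose (i+1)):ℚ) ≠ 0 := chooseQ_ne (n+1) (i+1) (by omega)
    have hc3 : (((n+1).choose (i+2)):ℚ) ≠ 0 := chooseQ_ne (n+1) (i+2) (by omega)
    have h7 : ((n:ℚ)+1) - ((i:ℚ)+1) = (n:ℚ) - i := by ring
    rw [h7] at hq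
    field_simp
    linear_combination ((-1:ℚ)^i) * hq
  rw [Finset.sum_congr rfl e2]
  have key : ∑ i ∈ range (n+1), (-1:ℚ)^i / (((i:ℚ)+1) * (((n+1).choose (i+1)):ℚ))
      = (∑ i ∈ range n, (-1:ℚ)^(i+1) / (((i:ℚ)+1+1) * (((n+1).choose (i+1+1)):ℚ)))
        + 1 / ((n:ℚ)+1) := by
    have := Finset.sum_range_succ'
      (fun j => (-1:ℚ)^j / (((j:ℚ)+1) * (((n+1).choose (j+1)):ℚ))) n
    simp only [Nat.cast_add, Nat.cast_one] at this
    rw [this]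
    norm_num
  have last : ∑ i ∈ range (n+1), (-1:ℚ)^i / (((i:ℚ)+1) * (((n+1).choose (i+1)):ℚ))
      = (∑ i ∈ range n, (-1:ℚ)^i / (((i:ℚ)+1) * (((n+1).choose (i+1)):ℚ)))
        + (-1:ℚ)^n / ((n:ℚ)+1) := by
    rw [Finset.sum_range_succ, Nat.choose_self]
    norm_num
  rw [Finset.sum_neg_distrib]
  have : ∑ i ∈ range n, (-1:ℚ)^(i+1) / (((i:ℚ)+1+1) * (((n+1).choose (i+1+1)):ℚ))
      = ∑ i ∈ range (n+1), (-1:ℚ)^i / (((i:ℚ)+1) * (((n+1).choose (i+1)):ℚ)) - 1/((n:ℚ)+1) := by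
    rw [key]; ring
  rw [this, last]
  ring

lemma sumG0 (n : ℕ) :
    ∑ i ∈ range n, (-1:ℚ)^i / (((i:ℚ)+1) * ((n:ℚ)-i) * (((n+1).choose (i+1)):ℚ))
      = (1 - (-1:ℚ)^n) / ((n:ℚ)+1)^2 := by
  have split : ∀ i ∈ range n,
      (-1:ℚ)^i / (((i:ℚ)+1) * ((n:ℚ)-i) * (((n+1).choose (i+1)):ℚ))
      = ((-1:ℚ)^i / (((i:ℚ)+1) * ((n.choose (i+1)):ℚ))) / ((n:ℚ)+1) := by
    intro i hi
    have hin : i + 1 ≤ n := by have := Finset.mem_range.mp hi; omega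
    have hq := chooseQ2 n (i+1) (by omega)
    push_cast at hq
    have hile : ((i:ℚ)+1) ≤ n := by exact_mod_cast hin
    have hni : (n:ℚ) - i ≠ 0 := by
      have : (0:ℚ) < (n:ℚ) - i := by linarith
      linarith
    have hi0 : ((i:ℚ)+1) ≠ 0 := by positivity
    have hn0 : ((n:ℚ)+1) ≠ 0 := by positivity
    have hc1 : ((n.choose (i+1)):ℚ) ≠ 0 := chooseQ_ne n (i+1) hin
    have hc2 : (((n+1).choose (i+1)):ℚ) ≠ 0 := chooseQ_ne (n+1) (i+1) (by omega)
    field_simp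
    linear_combination hq
  rw [Finset.sum_congr rfl split, ← Finset.sum_div, sumX1 n]
  rw [div_div]
  congr 1
  ring

lemma sumS1 (n : ℕ) :
    ∑ i ∈ range n, (-1:ℚ)^i / (((i:ℚ)+1)^2 * ((n.choose (i+1)):ℚ))
      = -(H2q n) - 2 * Eq2 n := by
  induction n with
  | zero => norm_num [H2q, Eq2]
  | succ n ih =>
    rw [Finset.sum_range_succ, Nat.choose_self]
    have split : ∀ i ∈ range n,
        (-1:ℚ)^i / (((i:ℚ)+1)^2 * (((n+1).choose (i+1)):ℚ))
        = (-1:ℚ)^i / (((i:ℚ)+1)^2 * ((n.choose (i+1)):ℚ))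
          - (-1:ℚ)^i / (((i:ℚ)+1) * ((n:ℚ)-i) * (((n+1).choose (i+1)):ℚ)) := by
      intro i hi
      have hin : i + 1 ≤ n := by have := Finset.mem_range.mp hi; omega
      have hq := chooseQ2 n (i+1) (by omega)
      push_cast at hq
      have hile : ((i:ℚ)+1) ≤ n := by exact_mod_cast hin
      have hni : (n:ℚ) - i ≠ 0 := by
        have : (0:ℚ) < (n:ℚ) - i := by linarith
        linarith
      have hi0 : ((i:ℚ)+1) ≠ 0 := by positivity
      have hn0 : ((n:ℚ)+1) ≠ 0 := by positivity
      have hc1 : ((n.choose (i+1)):ℚ) ≠ 0 := chooseQ_ne n (i+1) hin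
      have hc2 : (((n+1).choose (i+1)):ℚ) ≠ 0 := chooseQ_ne (n+1) (i+1) (by omega)
      field_simp
      linear_combination hq
    rw [Finset.sum_congr rfl split, Finset.sum_sub_distrib, ih, sumG0 n]
    rw [H2q_succ, Eq2_succ]
    have hn0 : ((n:ℚ)+1) ≠ 0 := by positivity
    push_cast
    field_simp
    ring

lemma Hq_sub_one (j : ℕ) : Hq j = Hq (j-1) + 1/(j:ℚ) := by
  cases j with
  | zero => norm_num
  | succ m => rw [Nat.succ_sub_one, Hq_succ]; push_cast; ring

lemma sumG (n : ℕ) :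
    ∑ i ∈ range n,
        (-1:ℚ)^i * (Hq n - Hq i) / (((i:ℚ)+1) * ((n:ℚ)-i) * (((n+1).choose (i+1)):ℚ))
      = Hq n / ((n:ℚ)+1)^2 + (1 - (-1:ℚ)^n) / ((n:ℚ)+1)^3 := by
  set g : ℕ → ℚ := fun j => (-1:ℚ)^j * (Hq n - Hq j) / (((j:ℚ)+1) * (((n+1).choose (j+1)):ℚ))
    with hg
  set g2 : ℕ → ℚ :=
      fun j => (-1:ℚ)^j * (Hq n - Hq (j-1)) / (((j:ℚ)+1) * (((n+1).choose (j+1)):ℚ)) with hg2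
  set h : ℕ → ℚ :=
      fun j => (-1:ℚ)^j * (1/(j:ℚ)) / (((j:ℚ)+1) * (((n+1).choose (j+1)):ℚ)) with hh
  have split : ∀ i ∈ range n,
      (-1:ℚ)^i * (Hq n - Hq i) / (((i:ℚ)+1) * ((n:ℚ)-i) * (((n+1).choose (i+1)):ℚ))
      = g i / ((n:ℚ)+1) + (-g2 (i+1)) / ((n:ℚ)+1) := by
    intro i hi
    have hin : i + 1 ≤ n := by have := Finset.mem_range.mp hi; omega
    have hq := chooseQ3 (n+1) (i+1) (by omega)
    push_cast at hq
    have h7 : ((n:ℚ)+1) - ((i:ℚ)+1) = (n:ℚ) - i := by ring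
    rw [h7] at hq
    have hile : ((i:ℚ)+1) ≤ n := by exact_mod_cast hin
    have hni : (n:ℚ) - i ≠ 0 := by
      have : (0:ℚ) < (n:ℚ) - i := by linarith
      linarith
    have hi0 : ((i:ℚ)+1) ≠ 0 := by positivity
    have hi1 : ((i:ℚ)+1+1) ≠ 0 := by positivity
    have hn0 : ((n:ℚ)+1) ≠ 0 := by positivity
    have hc2 : (((n+1).choose (i+1)):ℚ) ≠ 0 := chooseQ_ne (n+1) (i+1) (by omega)
    have hc3 : (((n+1).choose (i+2)):ℚ) ≠ 0 := chooseQ_ne (n+1) (i+2) (by omega)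
    simp only [hg, hg2]
    have hsimp : (i + 1 - 1 : ℕ) = i := by omega
    rw [hsimp]
    push_cast
    have stepA : (-1:ℚ)^i * (Hq n - Hq i) / (((i:ℚ)+1) * ((n:ℚ)-i) * (((n+1).choose (i+1)):ℚ))
        = (-1:ℚ)^i * (Hq n - Hq i) / (((i:ℚ)+1) * (((n+1).choose (i+1)):ℚ)) / ((n:ℚ)+1)
          + (-1:ℚ)^i * (Hq n - Hq i) / (((n:ℚ)-i) * (((n+1).choose (i+1)):ℚ)) / ((n:ℚ)+1) := by
      field_simp
      ring
    have stepB : (-1:ℚ)^i * (Hq n - Hq i) / (((n:ℚ)-i) * (((n+1).choose (i+1)):ℚ))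
        = -((-1:ℚ)^(i+1) * (Hq n - Hq i) / (((i:ℚ)+1+1) * (((n+1).choose (i+1+1)):ℚ))) := by
      rw [neg_div' ]
      rw [div_eq_div_iff (mul_ne_zero hni hc2) (mul_ne_zero hi1 hc3)]
      linear_combination ((-1:ℚ)^i * (Hq n - Hq i)) * hq
    rw [stepA, stepB]
  rw [Finset.sum_congr rfl split, Finset.sum_add_distrib, ← Finset.sum_div, ← Finset.sum_div]
  -- first piece: ∑_{range n} g = ∑_{range (n+1)} g  (last term is 0)
  have e1 : ∑ i ∈ range n, g i = ∑ j ∈ range (n+1), g j := by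
    rw [Finset.sum_range_succ]
    have : g n = 0 := by simp [hg]
    rw [this, add_zero]
  -- g2 = g + h termwise
  have e2 : ∀ j ∈ range (n+1), g2 j = g j + h j := by
    intro j _
    simp only [hg, hg2, hh]
    rw [Hq_sub_one j]
    ring
  -- reindex: ∑_{range n} g2 (i+1) = ∑_{range (n+1)} g2 - g2 0
  have e3 : ∑ i ∈ range n, g2 (i+1) = (∑ j ∈ range (n+1), g2 j) - g2 0 := by
    rw [Finset.sum_range_succ' g2 n]; ring
  -- h-sum equals -x1(n)/(n+1)
  have e4 : ∑ j ∈ range (n+1), h j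
      = -(1 - (-1:ℚ)^n) / (((n:ℚ)+1) * ((n:ℚ)+1)) := by
    rw [Finset.sum_range_succ' h n]
    have h0 : h 0 = 0 := by simp [hh]
    rw [h0, add_zero]
    have hterm : ∀ i ∈ range n,
        h (i+1) = -(((-1:ℚ)^i / (((i:ℚ)+1) * ((n.choose (i+1)):ℚ))) / ((n:ℚ)+1)) := by
      intro i hi
      have hin : i + 1 ≤ n := by have := Finset.mem_range.mp hi; omega
      have hq := chooseQ1 n (i+1)
      push_cast at hq
      have hi0 : ((i:ℚ)+1) ≠ 0 := by positivity
      have hi1 : ((i:ℚ)+1+1) ≠ 0 := by positivity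
      have hn0 : ((n:ℚ)+1) ≠ 0 := by positivity
      have hc1 : ((n.choose (i+1)):ℚ) ≠ 0 := chooseQ_ne n (i+1) hin
      have hc3 : (((n+1).choose (i+2)):ℚ) ≠ 0 := chooseQ_ne (n+1) (i+2) (by omega)
      simp only [hh]
      push_cast
      field_simp
      linear_combination (-(-1:ℚ)^i) * hq
    rw [Finset.sum_congr rfl hterm]
    rw [Finset.sum_neg_distrib, ← Finset.sum_div, sumX1 n]
    field_simp
  have e5 : g2 0 = Hq n / ((n:ℚ)+1) := by
    simp [hg2, Hq]
  calc (∑ i ∈ range n, g i) / ((n:ℚ)+1) + (∑ i ∈ range n, -g2 (i+1)) / ((n:ℚ)+1)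
      = ((∑ j ∈ range (n+1), g j) - ((∑ j ∈ range (n+1), g2 j) - g2 0)) / ((n:ℚ)+1) := by
        rw [e1, Finset.sum_neg_distrib, e3]; ring
    _ = ((∑ j ∈ range (n+1), g j) - ((∑ j ∈ range (n+1), (g j + h j)) - g2 0)) / ((n:ℚ)+1) := by
        rw [Finset.sum_congr rfl e2]
    _ = (g2 0 - ∑ j ∈ range (n+1), h j) / ((n:ℚ)+1) := by
        rw [Finset.sum_add_distrib]; ring
    _ = Hq n / ((n:ℚ)+1)^2 + (1 - (-1:ℚ)^n) / ((n:ℚ)+1)^3 := by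
        rw [e4, e5]
        have hn0 : ((n:ℚ)+1) ≠ 0 := by positivity
        field_simp
        ring

def Ssum (n : ℕ) : ℚ :=
  ∑ i ∈ range n, (-1:ℚ)^i * (Hq n - Hq i) / (((i:ℚ)+1)^2 * ((n.choose (i+1)):ℚ))

lemma Ssum_succ (n : ℕ) :
    Ssum (n+1) = Ssum n
      + (-(H2q (n+1)) - 2 * Eq2 (n+1)) / ((n:ℚ)+1)
      - Hq (n+1) / ((n:ℚ)+1)^2 - (-1:ℚ)^(n+1) / ((n:ℚ)+1)^3 := by
  unfold Ssum
  rw [Finset.sum_range_succ, Nat.choose_self]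
  have split : ∀ i ∈ range n,
      (-1:ℚ)^i * (Hq (n+1) - Hq i) / (((i:ℚ)+1)^2 * (((n+1).choose (i+1)):ℚ))
      = (-1:ℚ)^i * (Hq n - Hq i) / (((i:ℚ)+1)^2 * ((n.choose (i+1)):ℚ))
        - (-1:ℚ)^i * (Hq n - Hq i) / (((i:ℚ)+1) * ((n:ℚ)-i) * (((n+1).choose (i+1)):ℚ))
        + ((-1:ℚ)^i / (((i:ℚ)+1)^2 * (((n+1).choose (i+1)):ℚ))) / ((n:ℚ)+1) := by
    intro i hi
    have hin : i + 1 ≤ n := by have := Finset.mem_range.mp hi; omega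
    have hq := chooseQ2 n (i+1) (by omega)
    push_cast at hq
    have hile : ((i:ℚ)+1) ≤ n := by exact_mod_cast hin
    have hni : (n:ℚ) - i ≠ 0 := by
      have : (0:ℚ) < (n:ℚ) - i := by linarith
      linarith
    have hi0 : ((i:ℚ)+1) ≠ 0 := by positivity
    have hn0 : ((n:ℚ)+1) ≠ 0 := by positivity
    have hc1 : ((n.choose (i+1)):ℚ) ≠ 0 := chooseQ_ne n (i+1) hin
    have hc2 : (((n+1).choose (i+1)):ℚ) ≠ 0 := chooseQ_ne (n+1) (i+1) (by omega)
    rw [Hq_succ]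
    have hc2' : (((n+1).choose (i+1)):ℚ) * ((n:ℚ)-i) / ((n:ℚ)+1) ≠ 0 := by
      apply div_ne_zero (mul_ne_zero hc2 hni) hn0
    have ha : ((n.choose (i+1)):ℚ) = (((n+1).choose (i+1)):ℚ) * ((n:ℚ)-i) / ((n:ℚ)+1) := by
      rw [eq_div_iff hn0]; linear_combination hq
    rw [ha]
    field_simp
    ring
  rw [Finset.sum_congr rfl split]
  rw [Finset.sum_add_distrib, Finset.sum_sub_distrib, sumG n, ← Finset.sum_div]
  have e6 : ∑ i ∈ range n, (-1:ℚ)^i / (((i:ℚ)+1)^2 * (((n+1).choose (i+1)):ℚ))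
      = -(H2q (n+1)) - 2 * Eq2 (n+1) - (-1:ℚ)^n / ((n:ℚ)+1)^2 := by
    have h4 := sumS1 (n+1)
    rw [Finset.sum_range_succ, Nat.choose_self] at h4
    push_cast at h4
    linear_combination h4
  rw [e6, Hq_succ]
  have hn0 : ((n:ℚ)+1) ≠ 0 := by positivity
  push_cast
  field_simp
  ring

lemma main_identity (n : ℕ) :
    Lsum n = Hq n * (Hq n ^ 2 + H2q n) / 2 - Ssum n := by
  induction n with
  | zero => simp [Lsum, Ssum, Hq, H2q]
  | succ n ih =>
    rw [Lsum_succ, Ssum_succ, ih, Hq_succ, H2q_succ]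
    have hn0 : ((n:ℚ)+1) ≠ 0 := by positivity
    field_simp
    ring

theorem stmt_19 (n : ℕ) (hn : 0 < n) :
    ∑ k ∈ Finset.Icc 1 n, (-1 : ℚ) ^ (k - 1) / (k : ℚ) ^ 2 * (Nat.choose n k : ℚ) *
        Hq (n - k) =
      Hq n * (Hq n ^ 2 + H2q n) / 2 -
        ∑ k ∈ Finset.range n, (-1 : ℚ) ^ k * (Hq n - Hq k) /
          (((k : ℚ) + 1) * ((n : ℚ) - k) * (Nat.choose n k : ℚ)) := by
  have eL : ∑ k ∈ Finset.Icc 1 n, (-1 : ℚ) ^ (k - 1) / (k : ℚ) ^ 2 * (Nat.choose n k : ℚ) *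
      Hq (n - k) = Lsum n := by
    unfold Lsum
    rw [← Finset.Ico_add_one_right_eq_Icc, Finset.sum_Ico_eq_sum_range]
    have hrw : n + 1 - 1 = n := by omega
    rw [hrw]
    apply Finset.sum_congr rfl
    intro i _
    have h1 : 1 + i - 1 = i := by omega
    have h2 : n - (1 + i) = n - (i+1) := by omega
    rw [h1, h2]
    push_cast
    ring
  have eS : ∑ k ∈ Finset.range n, (-1 : ℚ) ^ k * (Hq n - Hq k) /
      (((k : ℚ) + 1) * ((n : ℚ) - k) * (Nat.choose n k : ℚ)) = Ssum n := by
    unfold Ssum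
    apply Finset.sum_congr rfl
    intro i hi
    have hin : i + 1 ≤ n := by have := Finset.mem_range.mp hi; omega
    have hq := chooseQ3 n i (by omega)
    push_cast at hq
    have hile : ((i:ℚ)+1) ≤ n := by exact_mod_cast hin
    have hni : (n:ℚ) - i ≠ 0 := by
      have : (0:ℚ) < (n:ℚ) - i := by linarith
      linarith
    have hi0 : ((i:ℚ)+1) ≠ 0 := by positivity
    have hc0 : ((n.choose i):ℚ) ≠ 0 := chooseQ_ne n i (by omega)
    have hc1 : ((n.choose (i+1)):ℚ) ≠ 0 := chooseQ_ne n (i+1) hin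
    rw [div_eq_div_iff (by exact mul_ne_zero (mul_ne_zero hi0 hni) hc0)
      (by exact mul_ne_zero (pow_ne_zero 2 hi0) hc1)]
    linear_combination ((-1:ℚ)^i * (Hq n - Hq i) * ((i:ℚ)+1)) * hq
  rw [eL, eS, main_identity n]
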